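/- Let κ ∈ ℕ and n ≥ κ. Let a ∈ L^1(𝕋) have Fourier coefficients {a_k} and suppose the (n+1)×(n+1) Toeplitz matrix T_n(a) = (a_{j−k})_{j,k=0}^n is invertible. Then the determinant of the κ×κ lower-left corner block of T_n^{-1}(a) (rows n−κ+1,…,n and columns 0,…,κ−1) equals (−1)^{nκ} D_{n−κ}[a(t)t^{−κ}]/D_n(a), where D_m[a(t)t^{−κ}] = det (a_{j−k+κ})_{j,k=0}^m. -/

import Mathlib

open Matrix

private lemma jac_block {m n : Type*} [Fintype m] [Fintype n] [DecidableEq m] [DecidableEq n]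
    (P Q : Matrix (m ⊕ n) (m ⊕ n) ℂ) (h : P * Q = 1) :
    P.det * (Q.toBlocks₁₁).det = (P.toBlocks₂₂).det := by
  rw [← Matrix.fromBlocks_toBlocks P, ← Matrix.fromBlocks_toBlocks Q,
    Matrix.fromBlocks_multiply, ← Matrix.fromBlocks_one] at h
  have h11 : P.toBlocks₁₁ * Q.toBlocks₁₁ + P.toBlocks₁₂ * Q.toBlocks₂₁ = 1 := by
    have := congrArg Matrix.toBlocks₁₁ h
    simp only [Matrix.toBlocks_fromBlocks₁₁] at this
    exact this
  have h21 : P.toBlocks₂₁ * Q.toBlocks₁₁ + P.toBlocks₂₂ * Q.toBlocks₂₁ = 0 := by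
    have := congrArg Matrix.toBlocks₂₁ h
    simp only [Matrix.toBlocks_fromBlocks₂₁] at this
    exact this
  have key : P * Matrix.fromBlocks Q.toBlocks₁₁ 0 Q.toBlocks₂₁ 1
      = Matrix.fromBlocks 1 P.toBlocks₁₂ 0 P.toBlocks₂₂ := by
    conv_lhs => rw [← Matrix.fromBlocks_toBlocks P]
    rw [Matrix.fromBlocks_multiply, h11, h21]
    simp
  have := congrArg Matrix.det key
  rw [Matrix.det_mul, Matrix.det_fromBlocks_zero₁₂, Matrix.det_fromBlocks_zero₂₁] at this
  simpa using this

theorem stmt_13 (a : ℤ → ℂ) (n κ : ℕ) (hκ : 1 ≤ κ) (hn : κ ≤ n)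
    (T : Matrix (Fin (n + 1)) (Fin (n + 1)) ℂ)
    (hT : ∀ j k, T j k = a ((j.1 : ℤ) - (k.1 : ℤ)))
    (hinv : IsUnit T) :
    Matrix.det (Matrix.of fun i j : Fin κ =>
        T⁻¹ ⟨n - κ + 1 + i.1, by have hi := i.isLt; omega⟩
            ⟨j.1, by have hj := j.isLt; omega⟩) =
      (-1 : ℂ) ^ (n * κ) *
        (Matrix.det (Matrix.of fun j k : Fin (n - κ + 1) =>
          a ((j.1 : ℤ) - (k.1 : ℤ) + (κ : ℤ))) / T.det) := by
  have hdet : IsUnit T.det := (Matrix.isUnit_iff_isUnit_det T).mp hinv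
  have hdet0 : T.det ≠ 0 := hdet.ne_zero
  set p := n - κ + 1 with hp
  have hpκ : p + κ = n + 1 := by omega
  have hκp : κ + p = n + 1 := by omega
  set γ : Fin κ ⊕ Fin p ≃ Fin (n + 1) := finSumFinEquiv.trans (finCongr hκp) with hγ
  set ρ : Fin κ ⊕ Fin p ≃ Fin (n + 1) :=
    (Equiv.sumComm (Fin κ) (Fin p)).trans (finSumFinEquiv.trans (finCongr hpκ)) with hρ
  have h1 : (T.submatrix γ ρ) * ((T⁻¹).submatrix ρ γ) = 1 := by
    rw [Matrix.submatrix_mul_equiv, Matrix.mul_nonsing_inv T hdet,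
      Matrix.submatrix_one_equiv]
  have eq1 := jac_block _ _ h1
  -- rotation permutation
  open Fin.NatCast in
  have hrot : ∀ (k : ℕ) (x : Fin (n + 1)), ((finRotate (n + 1)) ^ k) x = x + (k : Fin (n + 1)) := by
    intro k
    induction k with
    | zero => intro x; simp
    | succ k ih =>
      intro x
      rw [pow_succ, Equiv.Perm.mul_apply, ih, finRotate_succ_apply]
      push_cast
      abel
  set g : Equiv.Perm (Fin (n + 1)) := γ.symm.trans ρ with hgdef
  open Fin.NatCast in
  have hg : g = (finRotate (n + 1)) ^ p := by
    apply Equiv.ext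
    intro x
    obtain ⟨s, rfl⟩ := γ.surjective x
    rw [hrot]
    show ρ (γ.symm (γ s)) = γ s + (p : Fin (n + 1))
    rw [Equiv.symm_apply_apply]
    cases s with
    | inl i =>
      have hi := i.isLt
      apply Fin.ext
      simp [hρ, hγ, Fin.val_add, Fin.val_natCast]
      have h2 : ((i : ℕ) + p) % (n + 1) = (i : ℕ) + p := Nat.mod_eq_of_lt (by omega)
      omega
    | inr j =>
      have hj := j.isLt
      apply Fin.ext
      simp [hρ, hγ, Fin.val_add, Fin.val_natCast]
      have h2 : (κ + (j : ℕ) + p) % (n + 1) = (j : ℕ) := by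
        rw [show κ + (j : ℕ) + p = (j : ℕ) + (n + 1) from by omega, Nat.add_mod_right]
        exact Nat.mod_eq_of_lt (by omega)
      omega
  have hsg : Equiv.Perm.sign g = (-1 : ℤˣ) ^ (n * p) := by
    rw [hg, map_pow, sign_finRotate, Nat.add_sub_cancel, ← pow_mul]
  set σ : Equiv.Perm (Fin κ ⊕ Fin p) := ρ.trans γ.symm with hσdef
  have hσg : σ = Equiv.permCongr γ.symm g := by
    apply Equiv.ext
    intro x
    simp [hσdef, hgdef, Equiv.permCongr_apply]
  have hsσ : Equiv.Perm.sign σ = (-1 : ℤˣ) ^ (n * p) := by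
    rw [hσg, Equiv.Perm.sign_permCongr, hsg]
  -- determinant of T.submatrix γ ρ
  have hsub : T.submatrix γ ρ = (T.submatrix γ γ).submatrix id σ := by
    ext i j
    simp [hσdef]
  have hTdet : (T.submatrix γ ρ).det = ((-1 : ℂ) ^ (n * p)) * T.det := by
    rw [hsub, Matrix.det_permute', Matrix.det_submatrix_equiv_self, hsσ]
    norm_num
  have hO : (Matrix.of fun i j : Fin κ =>
        T⁻¹ ⟨n - κ + 1 + i.1, by have hi := i.isLt; omega⟩
            ⟨j.1, by have hj := j.isLt; omega⟩)
      = (T⁻¹.submatrix ⇑ρ ⇑γ).toBlocks₁₁ := by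
    ext i j
    have hi := i.isLt
    have hj := j.isLt
    simp only [Matrix.of_apply, Matrix.toBlocks₁₁, Matrix.submatrix_apply]
    rw [show ρ (Sum.inl i) = (⟨n - κ + 1 + (i : ℕ), by omega⟩ : Fin (n + 1)) from
        Fin.ext (by simp [hρ]; try omega),
      show γ (Sum.inl j) = (⟨(j : ℕ), by omega⟩ : Fin (n + 1)) from
        Fin.ext (by simp [hγ])]
  have hC : (Matrix.of fun j k : Fin (n - κ + 1) =>
        a ((j.1 : ℤ) - (k.1 : ℤ) + (κ : ℤ)))
      = (T.submatrix ⇑γ ⇑ρ).toBlocks₂₂ := by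
    ext j k
    simp only [Matrix.of_apply, Matrix.toBlocks₂₂, Matrix.submatrix_apply, hT]
    congr 1
    have h1 : ((γ (Sum.inr j) : Fin (n+1)) : ℕ) = κ + j := by simp [hγ]
    have h2 : ((ρ (Sum.inr k) : Fin (n+1)) : ℕ) = k := by simp [hρ]
    rw [h1, h2]
    push_cast
    ring
  have hsgn : ((-1:ℂ)^(n*p)) * ((-1:ℂ)^(n*κ)) = 1 := by
    rw [← pow_add, ← Nat.mul_add, hpκ]
    exact Even.neg_one_pow (Nat.even_mul_succ_self n)
  rw [hTdet] at eq1
  have goal' : T.det * (T⁻¹.submatrix ⇑ρ ⇑γ).toBlocks₁₁.det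
      = (-1:ℂ)^(n*κ) * (T.submatrix ⇑γ ⇑ρ).toBlocks₂₂.det := by
    linear_combination ((-1:ℂ)^(n*κ)) * eq1 -
      ((T⁻¹.submatrix ⇑ρ ⇑γ).toBlocks₁₁.det * T.det) * hsgn
  rw [hO, hC, ← mul_div_assoc, eq_div_iff hdet0]
  linear_combination goal'
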